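/- Let k be a field and M an m×n matrix of indeterminates over k with m ≥ n ≥ r ≥ 1. In the polynomial ring k[M], for any ℓ ≥ 1 and after the substitution x_{ij} = y_{11}·y_{ij} for (i,j) ≠ (1,1) and x_{11} = y_{11}, the ideal of ℓ×ℓ minors satisfies I_ℓ(M) = y_{11}^ℓ · I_{ℓ-1}(M₁'), where M₁' is the (m-1)×(n-1) matrix with entries f_{ij} = y_{ij} - y_{i1}y_{1j} for 2 ≤ i ≤ m, 2 ≤ j ≤ n. -/

import Mathlib

open MvPolynomial

/-- The ideal of `s × s` minors of a matrix `A`. -/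
def minorsIdeal {R : Type*} [CommRing R] {a b : ℕ} (s : ℕ)
    (A : Matrix (Fin a) (Fin b) R) : Ideal R :=
  Ideal.span {d | ∃ (f : Fin s → Fin a) (g : Fin s → Fin b),
    Function.Injective f ∧ Function.Injective g ∧ d = (A.submatrix f g).det}

section AuxLemmas
open Finset

theorem updColComm {R : Type*} [CommRing R] {s : ℕ} (M : Matrix (Fin s) (Fin s) R)
    {j₁ j₂ : Fin s} (hne : j₁ ≠ j₂) (x y : Fin s → R) :
    (M.updateCol j₁ x).updateCol j₂ y = (M.updateCol j₂ y).updateCol j₁ x := by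
  ext i j
  by_cases e1 : j = j₁
  · subst e1
    rw [Matrix.updateCol_ne hne, Matrix.updateCol_self, Matrix.updateCol_self]
  by_cases e2 : j = j₂
  · subst e2
    rw [Matrix.updateCol_self, Matrix.updateCol_ne (Ne.symm hne), Matrix.updateCol_self]
  · rw [Matrix.updateCol_ne e2, Matrix.updateCol_ne e1,
      Matrix.updateCol_ne e1, Matrix.updateCol_ne e2]

/-- Rank-one update determinant expansion. -/
theorem det_add_rankOne {R : Type*} [CommRing R] {s : ℕ} (A : Matrix (Fin s) (Fin s) R)
    (c w : Fin s → R) :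
    Matrix.det (Matrix.of fun i j => A i j + c i * w j)
      = A.det + ∑ j, w j * (A.updateCol j c).det := by
  classical
  set D : Finset (Fin s) → Matrix (Fin s) (Fin s) R :=
    fun t => Matrix.of fun i j => if j ∈ t then c i * w j else A i j with hD
  have key : ∀ t : Finset (Fin s), 1 < t.card → (D t).det = 0 := by
    intro t ht
    obtain ⟨j₁, hj₁, j₂, hj₂, hne⟩ := Finset.one_lt_card.mp ht
    set M0 : Matrix (Fin s) (Fin s) R := D (t \ {j₁, j₂}) with hM0
    have h1 : D t = (M0.updateCol j₂ (w j₂ • c)).updateCol j₁ (w j₁ • c) := by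
      ext i j
      by_cases e1 : j = j₁
      · subst e1
        simp [hD, hj₁, Matrix.updateCol_self, mul_comm]
      by_cases e2 : j = j₂
      · subst e2
        rw [Matrix.updateCol_ne e1, Matrix.updateCol_self]
        simp [hD, hj₂, mul_comm]
      · rw [Matrix.updateCol_ne e1, Matrix.updateCol_ne e2]
        simp only [hD, hM0, Matrix.of_apply, Finset.mem_sdiff, Finset.mem_insert,
          Finset.mem_singleton]
        by_cases h : j ∈ t <;> simp [h, e1, e2]
    rw [h1, Matrix.det_updateCol_smul,
      updColComm _ (Ne.symm hne), Matrix.det_updateCol_smul,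
      updColComm _ hne]
    have h3 : ((M0.updateCol j₂ c).updateCol j₁ c).det = 0 := by
      apply Matrix.det_zero_of_column_eq hne
      intro i
      rw [Matrix.updateCol_self, Matrix.updateCol_ne (Ne.symm hne),
        Matrix.updateCol_self]
    rw [h3, mul_zero, mul_zero]
  have hsplit : ∀ (t : Finset (Fin s)) (f g : Fin s → R),
      (∏ i, if i ∈ t then f i else g i) = (∏ i ∈ t, f i) * ∏ i ∈ univ \ t, g i := by
    intro t f g
    rw [Finset.prod_ite, Finset.filter_mem_eq_inter, Finset.univ_inter, ← Finset.sdiff_eq_filter]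
  have expand : Matrix.det (Matrix.of fun i j => A i j + c i * w j)
      = ∑ t ∈ (univ : Finset (Fin s)).powerset, (D t).det := by
    rw [Matrix.det_apply']
    have : ∀ σ : Equiv.Perm (Fin s),
        (∏ i, (Matrix.of fun i j => A i j + c i * w j) (σ i) i)
          = ∑ t ∈ (univ : Finset (Fin s)).powerset, ∏ i, (D t) (σ i) i := by
      intro σ
      have h0 : (∏ i, (Matrix.of fun i j => A i j + c i * w j) (σ i) i)
          = ∏ i, ((fun i => c (σ i) * w i) i + (fun i => A (σ i) i) i) := by
        refine Finset.prod_congr rfl fun i _ => ?_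
        simp [add_comm]
      rw [h0, Finset.prod_add]
      refine Finset.sum_congr rfl fun t _ => ?_
      rw [← hsplit t (fun i => c (σ i) * w i) (fun i => A (σ i) i)]
      exact (Finset.prod_congr rfl fun i _ => rfl)
    calc (∑ σ : Equiv.Perm (Fin s), (Equiv.Perm.sign σ : R)
            * ∏ i, (Matrix.of fun i j => A i j + c i * w j) (σ i) i)
        = ∑ σ : Equiv.Perm (Fin s), ∑ t ∈ (univ : Finset (Fin s)).powerset,
            (Equiv.Perm.sign σ : R) * ∏ i, (D t) (σ i) i := by
          refine Finset.sum_congr rfl fun σ _ => ?_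
          rw [this σ, Finset.mul_sum]
      _ = ∑ t ∈ (univ : Finset (Fin s)).powerset, ∑ σ : Equiv.Perm (Fin s),
            (Equiv.Perm.sign σ : R) * ∏ i, (D t) (σ i) i := Finset.sum_comm
      _ = ∑ t ∈ (univ : Finset (Fin s)).powerset, (D t).det := by
          refine Finset.sum_congr rfl fun t _ => ?_
          rw [Matrix.det_apply']
  rw [expand]
  have hT : (insert (∅ : Finset (Fin s)) (univ.image fun j => ({j} : Finset (Fin s))))
      ⊆ univ.powerset := fun t _ => Finset.mem_powerset.mpr (Finset.subset_univ t)
  rw [← Finset.sum_subset hT]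
  · have hemp : (∅ : Finset (Fin s)) ∉ univ.image fun j => ({j} : Finset (Fin s)) := by
      simp
    rw [Finset.sum_insert hemp,
      Finset.sum_image (fun i _ j _ h => Finset.singleton_injective h)]
    have hD0 : (D ∅).det = A.det := by
      have : D ∅ = A := by
        ext i j
        simp [hD]
      rw [this]
    have hD1 : ∀ j, (D {j}).det = w j * (A.updateCol j c).det := by
      intro j
      have : D {j} = A.updateCol j (w j • c) := by
        ext i j'
        by_cases h : j' = j
        · subst h; simp [hD, Matrix.updateCol_self, mul_comm]
        · rw [Matrix.updateCol_ne h]; simp [hD, h]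
      rw [this, Matrix.det_updateCol_smul]
    rw [hD0]
    exact congrArg _ (Finset.sum_congr rfl fun j _ => hD1 j)
  · intro t htp hnt
    apply key
    rcases Nat.lt_or_ge 1 t.card with h | h
    · exact h
    · exfalso
      interval_cases h' : t.card
      · exact hnt (by simp [Finset.card_eq_zero.mp h'])
      · obtain ⟨a, rfl⟩ := Finset.card_eq_one.mp h'
        exact hnt (Finset.mem_insert_of_mem (Finset.mem_image_of_mem _ (Finset.mem_univ a)))

theorem det_submatrix_succ_mem {R : Type*} [CommRing R] {a b s : ℕ}
    (B : Matrix (Fin a) (Fin b) R) (p : Fin (s + 1) → Fin a) (q : Fin (s + 1) → Fin b)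
    (hp : Function.Injective p) (hq : Function.Injective q) :
    (B.submatrix p q).det ∈ minorsIdeal s B := by
  rw [Matrix.det_succ_row_zero]
  refine Ideal.sum_mem _ fun j _ => ?_
  refine Ideal.mul_mem_left _ _ ?_
  rw [Matrix.submatrix_submatrix]
  exact Ideal.subset_span ⟨p ∘ Fin.succ, q ∘ j.succAbove,
    hp.comp (Fin.succ_injective s), hq.comp Fin.succAbove_right_injective, rfl⟩

end AuxLemmas

section Main

variable (k : Type*) [CommRing k] (m n : ℕ)

private noncomputable def Nmat : Matrix (Fin (m + 1)) (Fin (n + 1))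
    (MvPolynomial (Fin (m + 1) × Fin (n + 1)) k) :=
  fun i j => if i = 0 ∧ j = 0 then 1 else X (i, j)

private noncomputable def Amat : Matrix (Fin (m + 1)) (Fin (n + 1))
    (MvPolynomial (Fin (m + 1) × Fin (n + 1)) k) :=
  fun i j => if i = 0 ∨ j = 0 then 0 else X (i, j) - X (i, 0) * X (0, j)

private noncomputable def Mmat' : Matrix (Fin m) (Fin n)
    (MvPolynomial (Fin (m + 1) × Fin (n + 1)) k) :=
  fun i j => X (i.succ, j.succ) - X (i.succ, 0) * X (0, j.succ)

private noncomputable def uvec : Fin (m + 1) → MvPolynomial (Fin (m + 1) × Fin (n + 1)) k :=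
  fun i => if i = 0 then 1 else X (i, 0)

private noncomputable def vvec : Fin (n + 1) → MvPolynomial (Fin (m + 1) × Fin (n + 1)) k :=
  fun j => if j = 0 then 1 else X (0, j)

private lemma N_eq_A_add (i : Fin (m + 1)) (j : Fin (n + 1)) :
    Nmat k m n i j = Amat k m n i j + uvec k m n i * vvec k m n j := by
  by_cases hi : i = 0 <;> by_cases hj : j = 0 <;>
    simp [Nmat, Amat, uvec, vvec, hi, hj]

private lemma Amat_minor_mem {ℓ : ℕ} (s : ℕ) (hs : s = ℓ ∨ s = ℓ + 1)
    (p : Fin s → Fin (m + 1)) (q : Fin s → Fin (n + 1))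
    (hp : Function.Injective p) (hq : Function.Injective q) :
    ((Amat k m n).submatrix p q).det ∈ minorsIdeal ℓ (Mmat' k m n) := by
  by_cases h1 : ∃ i, p i = 0
  · obtain ⟨i, hi⟩ := h1
    rw [Matrix.det_eq_zero_of_row_eq_zero i (fun j => by simp [Amat, hi])]
    exact zero_mem _
  by_cases h2 : ∃ j, q j = 0
  · obtain ⟨j, hj⟩ := h2
    rw [Matrix.det_eq_zero_of_column_eq_zero j (fun i => by simp [Amat, hj])]
    exact zero_mem _
  push_neg at h1 h2
  have heq : (Amat k m n).submatrix p q
      = (Mmat' k m n).submatrix (fun i => (p i).pred (h1 i)) (fun j => (q j).pred (h2 j)) := by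
    ext i j
    simp only [Matrix.submatrix_apply, Amat, Mmat', Fin.succ_pred]
    rw [if_neg (not_or.mpr ⟨h1 i, h2 j⟩)]
  have hp' : Function.Injective fun i => (p i).pred (h1 i) := by
    intro a b hab
    apply hp
    have := congrArg Fin.succ hab
    rwa [Fin.succ_pred, Fin.succ_pred] at this
  have hq' : Function.Injective fun j => (q j).pred (h2 j) := by
    intro a b hab
    apply hq
    have := congrArg Fin.succ hab
    rwa [Fin.succ_pred, Fin.succ_pred] at this
  rw [heq]
  rcases hs with rfl | rfl
  · exact Ideal.subset_span ⟨_, _, hp', hq', rfl⟩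
  · exact det_submatrix_succ_mem _ _ _ hp' hq'

private lemma Nmat_minor_mem {ℓ : ℕ} (f : Fin (ℓ + 1) → Fin (m + 1))
    (g : Fin (ℓ + 1) → Fin (n + 1))
    (hf : Function.Injective f) (hg : Function.Injective g) :
    ((Nmat k m n).submatrix f g).det ∈ minorsIdeal ℓ (Mmat' k m n) := by
  have hN : (Nmat k m n).submatrix f g
      = Matrix.of fun i j => ((Amat k m n).submatrix f g) i j
          + (fun i => uvec k m n (f i)) i * (fun j => vvec k m n (g j)) j := by
    exact Matrix.ext fun i j => N_eq_A_add k m n (f i) (g j)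
  rw [hN, det_add_rankOne]
  refine add_mem (Amat_minor_mem k m n (ℓ + 1) (Or.inr rfl) f g hf hg)
    (Ideal.sum_mem _ fun j _ => Ideal.mul_mem_left _ _ ?_)
  rw [Matrix.det_succ_column _ j]
  refine Ideal.sum_mem _ fun i _ => Ideal.mul_mem_left _ _ ?_
  have hsub : ((((Amat k m n).submatrix f g).updateCol j fun i => uvec k m n (f i)).submatrix
        i.succAbove j.succAbove)
      = (Amat k m n).submatrix (f ∘ i.succAbove) (g ∘ j.succAbove) := by
    ext a b
    rw [Matrix.submatrix_apply, Matrix.updateCol_ne (Fin.succAbove_ne j b),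
      Matrix.submatrix_apply]
    rfl
  rw [hsub]
  exact Amat_minor_mem k m n ℓ (Or.inl rfl) _ _
    (hf.comp Fin.succAbove_right_injective) (hg.comp Fin.succAbove_right_injective)

private lemma Nmat_schur {ℓ : ℕ} (p : Fin ℓ → Fin m) (q : Fin ℓ → Fin n) :
    ((Nmat k m n).submatrix (Fin.cons 0 (Fin.succ ∘ p)) (Fin.cons 0 (Fin.succ ∘ q))).det
      = ((Mmat' k m n).submatrix p q).det := by
  let e : Fin 1 ⊕ Fin ℓ ≃ Fin (ℓ + 1) := finSumFinEquiv.trans (finCongr (Nat.add_comm 1 ℓ))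
  rw [← Matrix.det_submatrix_equiv_self e]
  have he0 : e (Sum.inl 0) = 0 := by
    ext
    simp [e]
  have heS : ∀ i : Fin ℓ, e (Sum.inr i) = i.succ := by
    intro i
    ext
    simp [e, Nat.add_comm]
  have hblock : (((Nmat k m n).submatrix (Fin.cons 0 (Fin.succ ∘ p))
        (Fin.cons 0 (Fin.succ ∘ q))).submatrix e e)
      = Matrix.fromBlocks 1 (Matrix.of fun _ j => X (0, (q j).succ))
          (Matrix.of fun i _ => X ((p i).succ, 0))
          (Matrix.of fun i j => X ((p i).succ, (q j).succ)) := by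
    ext i j
    rcases i with i | i <;> rcases j with j | j
    · obtain rfl := Fin.eq_zero i
      obtain rfl := Fin.eq_zero j
      simp [he0, Nmat]
    · obtain rfl := Fin.eq_zero i
      simp [he0, heS, Nmat, Fin.succ_ne_zero]
    · obtain rfl := Fin.eq_zero j
      simp [he0, heS, Nmat, Fin.succ_ne_zero]
    · simp [heS, Nmat, Fin.succ_ne_zero]
  rw [hblock, Matrix.det_fromBlocks_one₁₁]
  congr 1
  ext i j
  simp [Matrix.mul_apply, Mmat', Fin.sum_univ_one]

end Main

/-- On the chart `U₁₁` of the blow-up, after substituting `x_{00} = y_{00}` and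
`x_{ij} = y_{00} y_{ij}` for `(i,j) ≠ (0,0)`, the ideal of `(ℓ+1) × (ℓ+1)` minors
of the `(m+1) × (n+1)` matrix of indeterminates satisfies
`I_{ℓ+1}(M) = y_{00}^{ℓ+1} · I_ℓ(M₁')`, where `M₁'` is the `m × n` matrix with
entries `f_{ij} = y_{ij} - y_{i0} y_{0j}`. -/
theorem stmt_12 (k : Type*) [Field k] (m n ℓ : ℕ) (hnm : n ≤ m) :
    minorsIdeal (ℓ + 1)
        (fun (i : Fin (m + 1)) (j : Fin (n + 1)) =>
          if i = 0 ∧ j = 0 then (X (0, 0) : MvPolynomial (Fin (m + 1) × Fin (n + 1)) k)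
          else X (0, 0) * X (i, j)) =
      Ideal.span {(X (0, 0) : MvPolynomial (Fin (m + 1) × Fin (n + 1)) k) ^ (ℓ + 1)} *
        minorsIdeal ℓ
          (fun (i : Fin m) (j : Fin n) =>
            (X (i.succ, j.succ) : MvPolynomial (Fin (m + 1) × Fin (n + 1)) k) -
              X (i.succ, 0) * X (0, j.succ)) := by
  classical
  set B : Matrix (Fin (m + 1)) (Fin (n + 1)) (MvPolynomial (Fin (m + 1) × Fin (n + 1)) k) :=
    (fun (i : Fin (m + 1)) (j : Fin (n + 1)) =>
      if i = 0 ∧ j = 0 then (X (0, 0) : MvPolynomial (Fin (m + 1) × Fin (n + 1)) k)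
      else X (0, 0) * X (i, j)) with hB
  set M2 : Matrix (Fin m) (Fin n) (MvPolynomial (Fin (m + 1) × Fin (n + 1)) k) :=
    (fun (i : Fin m) (j : Fin n) =>
      (X (i.succ, j.succ) : MvPolynomial (Fin (m + 1) × Fin (n + 1)) k) -
        X (i.succ, 0) * X (0, j.succ)) with hM2
  have hMN : ∀ (f : Fin (ℓ + 1) → Fin (m + 1)) (g : Fin (ℓ + 1) → Fin (n + 1)),
      (B.submatrix f g).det = X (0, 0) ^ (ℓ + 1) * ((Nmat k m n).submatrix f g).det := by
    intro f g
    have hsm : B.submatrix f g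
        = (X (0, 0) : MvPolynomial (Fin (m + 1) × Fin (n + 1)) k) •
            ((Nmat k m n).submatrix f g) := by
      refine Matrix.ext fun i j => ?_
      simp only [hB, Matrix.submatrix_apply, Matrix.smul_apply, smul_eq_mul, Nmat]
      by_cases h : f i = 0 ∧ g j = 0 <;> simp [h, Matrix.submatrix]
    rw [hsm, Matrix.det_smul, Fintype.card_fin]
  apply le_antisymm
  · refine Ideal.span_le.mpr ?_
    rintro d ⟨f, g, hf, hg, rfl⟩
    rw [SetLike.mem_coe, hMN f g]
    exact Ideal.mul_mem_mul (Ideal.subset_span rfl) (Nmat_minor_mem k m n f g hf hg)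
  · rw [Ideal.mul_le]
    intro r hr s hs
    obtain ⟨t, rfl⟩ := Ideal.mem_span_singleton'.mp hr
    rw [mul_assoc]
    apply Ideal.mul_mem_left
    induction hs using Submodule.span_induction with
    | mem d hd =>
        obtain ⟨p, q, hp, hq, rfl⟩ := hd
        refine Ideal.subset_span ⟨Fin.cons 0 (Fin.succ ∘ p), Fin.cons 0 (Fin.succ ∘ q), ?_, ?_, ?_⟩
        · refine Fin.cons_injective_iff.mpr ⟨?_, (Fin.succ_injective _).comp hp⟩
          rintro ⟨i, hi⟩
          exact Fin.succ_ne_zero _ hi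
        · refine Fin.cons_injective_iff.mpr ⟨?_, (Fin.succ_injective _).comp hq⟩
          rintro ⟨j, hj⟩
          exact Fin.succ_ne_zero _ hj
        · rw [hMN, Nmat_schur]
          rfl
    | zero => rw [mul_zero]; exact zero_mem _
    | add x y hx hy ihx ihy => rw [mul_add]; exact add_mem ihx ihy
    | smul a x hx ih =>
        rw [smul_eq_mul, mul_left_comm]
        exact Ideal.mul_mem_left _ _ ih
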